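/- Let B > 0 and c > 0, and let X, X' be independent random variables, each uniformly distributed on the interval [-B, B]. Then E[ exp( -c² (X - X')² / 4 ) ] = φ(cB). -/

import Mathlib

open MeasureTheory Real intervalIntegral

/-- The Gaussian Q-function. -/
noncomputable def Qfun (t : ℝ) : ℝ :=
  ∫ s in Set.Ioi t, (2 * π) ^ (-(1 : ℝ) / 2) * Real.exp (-s ^ 2 / 2)

/-- The function `φ(x) = (1/x²)(e^{-x²} - 1 + √π x (1 - 2Q(√2 x)))`. -/
noncomputable def phi (x : ℝ) : ℝ :=
  (1 / x ^ 2) * (Real.exp (-x ^ 2) - 1 + Real.sqrt π * x * (1 - 2 * Qfun (Real.sqrt 2 * x)))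

lemma gauss_int : ∫ s in Set.Ioi (0:ℝ), Real.exp (-s^2/2) = Real.sqrt (2*π) / 2 := by
  have := integral_gaussian_Ioi (1/2 : ℝ)
  rw [show (π / (1/2) : ℝ) = 2 * π by ring] at this
  rw [← this]
  congr 1 with s
  ring_nf

lemma gauss_integrable : Integrable (fun s : ℝ => Real.exp (-s^2/2)) := by
  have := integrable_exp_neg_mul_sq (show (0:ℝ) < 1/2 by norm_num)
  convert this using 2 with s
  ring

lemma Qfun_eq (T : ℝ) (hT : 0 ≤ T) :
    Qfun T = 1/2 - (2*π) ^ (-(1:ℝ)/2) * ∫ s in (0:ℝ)..T, Real.exp (-s^2/2) := by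
  have key : (∫ s in Set.Ioc (0:ℝ) T, Real.exp (-s^2/2)) + ∫ s in Set.Ioi T, Real.exp (-s^2/2)
      = ∫ s in Set.Ioi (0:ℝ), Real.exp (-s^2/2) := by
    rw [← setIntegral_union (by simp [Set.disjoint_left]) measurableSet_Ioi
      gauss_integrable.integrableOn gauss_integrable.integrableOn, Set.Ioc_union_Ioi_eq_Ioi hT]
  have hrp : ((2*π : ℝ)) ^ (-(1:ℝ)/2) = (Real.sqrt (2*π))⁻¹ := by
    rw [Real.sqrt_eq_rpow, ← Real.rpow_neg (by positivity)]
    norm_num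
  have h1 : Qfun T = (2*π) ^ (-(1:ℝ)/2) * ∫ s in Set.Ioi T, Real.exp (-s^2/2) := by
    rw [Qfun, MeasureTheory.integral_const_mul]
  rw [h1, intervalIntegral.integral_of_le hT]
  have key2 : (∫ s in Set.Ioi T, Real.exp (-s^2/2))
      = Real.sqrt (2*π)/2 - ∫ s in Set.Ioc (0:ℝ) T, Real.exp (-s^2/2) := by
    rw [← gauss_int, ← key]; ring
  rw [key2, hrp]
  have h2 : Real.sqrt (2*π) ≠ 0 := by positivity
  rw [mul_sub, ← mul_div_assoc, inv_mul_cancel₀ h2]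

lemma F_eq (c B : ℝ) (hc : 0 < c) (hB : 0 < B) :
    ∫ u in (0:ℝ)..(2*B), Real.exp (-(c^2*u^2)/4)
      = (Real.sqrt π / c) * (1 - 2 * Qfun (Real.sqrt 2 * (c*B))) := by
  have hs2 : Real.sqrt 2 * Real.sqrt 2 = 2 := Real.mul_self_sqrt (by norm_num)
  have hs2pos : (0:ℝ) < Real.sqrt 2 := by positivity
  have hk : (c / Real.sqrt 2) ≠ 0 := by positivity
  have e1 : ∀ u : ℝ, Real.exp (-(c^2*u^2)/4) = Real.exp (-(c/Real.sqrt 2*u)^2/2) := by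
    intro u; congr 1
    rw [mul_pow, div_pow, Real.sq_sqrt (by norm_num : (2:ℝ) ≥ 0)]
    ring
  have e2 : c / Real.sqrt 2 * (2*B) = Real.sqrt 2 * (c*B) := by
    field_simp; linear_combination (-1) * (Real.sq_sqrt (by norm_num : (0:ℝ) ≤ 2))
  have sub := intervalIntegral.integral_comp_mul_left (fun s => Real.exp (-s^2/2))
    (c := c / Real.sqrt 2) hk (a := 0) (b := 2*B)
  simp only [mul_zero, e2] at sub
  calc ∫ u in (0:ℝ)..(2*B), Real.exp (-(c^2*u^2)/4)
      = ∫ u in (0:ℝ)..(2*B), Real.exp (-(c/Real.sqrt 2*u)^2/2) := by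
        simp only [e1]
    _ = (c / Real.sqrt 2)⁻¹ • ∫ s in (0:ℝ)..(Real.sqrt 2*(c*B)), Real.exp (-s^2/2) := sub
    _ = (Real.sqrt π / c) * (1 - 2 * Qfun (Real.sqrt 2 * (c*B))) := by
        have hQ := Qfun_eq (Real.sqrt 2 * (c*B)) (by positivity)
        have hrp : ((2*π : ℝ)) ^ (-(1:ℝ)/2) = (Real.sqrt (2*π))⁻¹ := by
          rw [Real.sqrt_eq_rpow, ← Real.rpow_neg (by positivity)]
          norm_num
        have hI : ∫ s in (0:ℝ)..(Real.sqrt 2*(c*B)), Real.exp (-s^2/2)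
            = Real.sqrt (2*π) * (1/2 - Qfun (Real.sqrt 2 * (c*B))) := by
          rw [hrp] at hQ
          have h2 : Real.sqrt (2*π) ≠ 0 := by positivity
          field_simp at hQ ⊢
          linarith
        rw [hI, Real.sqrt_mul (by norm_num : (0:ℝ) ≤ 2), smul_eq_mul]
        have hπ : Real.sqrt π ≥ 0 := Real.sqrt_nonneg _
        field_simp
        ring_nf
        rw [Real.sq_sqrt (by norm_num : (0:ℝ) ≤ 2)]
        ring

lemma intT (c B : ℝ) (hc : 0 < c) :
    ∫ u in (0:ℝ)..(2*B), u * Real.exp (-(c^2*u^2)/4)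
      = (2/c^2) * (1 - Real.exp (-(c^2*B^2))) := by
  have hc2 : (c:ℝ)^2 ≠ 0 := by positivity
  have hderiv : ∀ u ∈ Set.uIcc (0:ℝ) (2*B),
      HasDerivAt (fun t => -(2/c^2) * Real.exp (-(c^2*t^2)/4))
        (u * Real.exp (-(c^2*u^2)/4)) u := by
    intro u _
    have h1 : HasDerivAt (fun t : ℝ => -(c^2*t^2)/4) (-(c^2*(2*u))/4) u := by
      have := (((hasDerivAt_pow 2 u).const_mul (c^2)).neg).div_const 4
      simpa using this
    have h2 := (h1.exp).const_mul (-(2/c^2))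
    refine h2.congr_deriv ?_
    field_simp
    ring
  have hint : IntervalIntegrable (fun u => u * Real.exp (-(c^2*u^2)/4)) volume 0 (2*B) :=
    (by continuity : Continuous fun u : ℝ => u * Real.exp (-(c^2*u^2)/4)).intervalIntegrable _ _
  rw [intervalIntegral.integral_eq_sub_of_hasDerivAt hderiv hint]
  have : c^2*(2*B)^2/4 = c^2*B^2 := by ring
  field_simp
  ring_nf
  simp only [Real.exp_zero]
  ring

lemma main_int (c B : ℝ) (hc : 0 < c) (hB : 0 < B) :
    ∫ x in (-B)..B, ∫ y in (-B)..B, Real.exp (-(c^2*(x-y)^2)/4)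
      = 2 * (2*B * ((Real.sqrt π / c) * (1 - 2 * Qfun (Real.sqrt 2*(c*B))))
          - (2/c^2) * (1 - Real.exp (-(c^2*B^2)))) := by
  set g : ℝ → ℝ := fun u => Real.exp (-(c^2*u^2)/4) with hg
  set F : ℝ → ℝ := fun t => ∫ u in (0:ℝ)..t, g u with hF
  have hgcont : Continuous g := by continuity
  have hgint : ∀ a b : ℝ, IntervalIntegrable g volume a b :=
    fun a b => hgcont.intervalIntegrable a b
  have hFderiv : ∀ t : ℝ, HasDerivAt F (g t) t :=
    fun t => (hgcont.integral_hasStrictDerivAt 0 t).hasDerivAt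
  have hFcont : Continuous F :=
    continuous_iff_continuousAt.2 fun t => (hFderiv t).continuousAt
  have hgeven : ∀ u : ℝ, g (-u) = g u := by intro u; simp [hg]
  have hFodd : ∀ t : ℝ, F (-t) = - F t := by
    intro t
    have h := intervalIntegral.integral_comp_neg g (a := 0) (b := -t)
    simp only [hgeven, neg_neg, neg_zero] at h
    show (∫ u in (0:ℝ)..(-t), g u) = -(∫ u in (0:ℝ)..t, g u)
    rw [h, intervalIntegral.integral_symm]
  have step1 : ∀ x : ℝ, (∫ y in (-B)..B, Real.exp (-(c^2*(x-y)^2)/4))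
      = F (x+B) - F (x-B) := by
    intro x
    have h1 : (∫ y in (-B)..B, g (x - y)) = ∫ u in (x-B)..(x+B), g u := by
      simpa using intervalIntegral.integral_comp_sub_left g x (a := -B) (b := B)
    have h2 := intervalIntegral.integral_interval_sub_left (hgint 0 (x+B)) (hgint 0 (x-B))
    calc (∫ y in (-B)..B, Real.exp (-(c^2*(x-y)^2)/4)) = ∫ y in (-B)..B, g (x - y) := rfl
      _ = ∫ u in (x-B)..(x+B), g u := h1
      _ = F (x+B) - F (x-B) := h2.symm
  simp only [step1]
  have hint1 : IntervalIntegrable (fun x => F (x+B)) volume (-B) B :=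
    (hFcont.comp (by continuity)).intervalIntegrable _ _
  have hint2 : IntervalIntegrable (fun x => F (x-B)) volume (-B) B :=
    (hFcont.comp (by continuity)).intervalIntegrable _ _
  rw [intervalIntegral.integral_sub hint1 hint2]
  have step3 : (∫ x in (-B)..B, F (x+B)) = ∫ t in (0:ℝ)..(2*B), F t := by
    have := intervalIntegral.integral_comp_add_right F B (a := -B) (b := B)
    simpa [two_mul] using this
  have step4 : (∫ x in (-B)..B, F (x-B)) = - ∫ t in (0:ℝ)..(2*B), F t := by
    have h1 := intervalIntegral.integral_comp_sub_right F B (a := -B) (b := B)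
    have h2 : (∫ x in (0:ℝ)..(2*B), F (-x)) = ∫ x in (-(2*B))..(0:ℝ), F x := by
      simpa using intervalIntegral.integral_comp_neg F (a := 0) (b := 2*B)
    simp only [hFodd] at h2
    rw [intervalIntegral.integral_neg] at h2
    rw [h1]
    have : -B - B = -(2*B) := by ring
    have hb : B - B = (0:ℝ) := by ring
    rw [this, hb, ← h2]
  rw [step3, step4]
  have ibp : (∫ t in (0:ℝ)..(2*B), F t)
      = F (2*B) * (2*B) - ∫ t in (0:ℝ)..(2*B), g t * t := by
    have := intervalIntegral.integral_mul_deriv_eq_deriv_mul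
      (u := F) (u' := g) (v := fun t : ℝ => t) (v' := fun _ : ℝ => (1:ℝ))
      (a := 0) (b := 2*B)
      (fun x _ => hFderiv x) (fun x _ => hasDerivAt_id x)
      (hgint 0 (2*B)) (intervalIntegrable_const)
    simp only [mul_one] at this
    rw [this]
    simp [hF]
  rw [ibp]
  have hgt : (∫ t in (0:ℝ)..(2*B), g t * t) = (2/c^2) * (1 - Real.exp (-(c^2*B^2))) := by
    rw [← intT c B hc]
    congr 1 with t
    ring
  rw [hgt]
  have hF2B : F (2*B) = (Real.sqrt π / c) * (1 - 2 * Qfun (Real.sqrt 2*(c*B))) :=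
    F_eq c B hc hB
  rw [hF2B]
  ring

/-- If `X, X'` are independent random variables, each uniform on `[-B, B]`, then
`E[exp(-c²(X-X')²/4)] = φ(cB)`. -/
theorem stmt10 {Ω : Type*} [MeasurableSpace Ω] (ℙ : Measure Ω) [IsProbabilityMeasure ℙ]
    (B c : ℝ) (hB : 0 < B) (hc : 0 < c)
    (X X' : Ω → ℝ) (hmX : Measurable X) (hmX' : Measurable X')
    (hindep : ProbabilityTheory.IndepFun X X' ℙ)
    (hX : Measure.map X ℙ = (ENNReal.ofReal (2 * B))⁻¹ • volume.restrict (Set.Icc (-B) B))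
    (hX' : Measure.map X' ℙ = (ENNReal.ofReal (2 * B))⁻¹ • volume.restrict (Set.Icc (-B) B)) :
    ∫ ω, Real.exp (-(c ^ 2 * (X ω - X' ω) ^ 2) / 4) ∂ℙ = phi (c * B) := by
  set μ : Measure ℝ := (ENNReal.ofReal (2 * B))⁻¹ • volume.restrict (Set.Icc (-B) B) with hμ
  set f : ℝ × ℝ → ℝ := fun p => Real.exp (-(c ^ 2 * (p.1 - p.2) ^ 2) / 4) with hfdef
  have hfc : Continuous f := by
    apply Real.continuous_exp.comp
    continuity
  have hμfin : IsFiniteMeasure μ := by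
    constructor
    rw [hμ, Measure.smul_apply, Measure.restrict_apply MeasurableSet.univ, Set.univ_inter,
      Real.volume_Icc, smul_eq_mul]
    exact ENNReal.mul_lt_top (ENNReal.inv_lt_top.2 (by positivity)) ENNReal.ofReal_lt_top
  have hmap : Measure.map (fun ω => (X ω, X' ω)) ℙ = μ.prod μ := by
    rw [show μ.prod μ = (Measure.map X ℙ).prod (Measure.map X' ℙ) by rw [hX, hX']]
    exact (ProbabilityTheory.indepFun_iff_map_prod_eq_prod_map_map
      hmX.aemeasurable hmX'.aemeasurable).1 hindep
  have h1 : ∫ ω, Real.exp (-(c ^ 2 * (X ω - X' ω) ^ 2) / 4) ∂ℙ = ∫ p, f p ∂(μ.prod μ) := by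
    rw [← hmap, integral_map (hmX.prodMk hmX').aemeasurable hfc.aestronglyMeasurable]
  have hfint : Integrable f (μ.prod μ) := by
    apply Integrable.mono' (integrable_const (1:ℝ)) hfc.aestronglyMeasurable
    filter_upwards with p
    rw [Real.norm_eq_abs, Real.abs_exp]
    apply Real.exp_le_one_iff.2
    have : (0:ℝ) ≤ c ^ 2 * (p.1 - p.2) ^ 2 := by positivity
    linarith
  have h2 : ∀ h : ℝ → ℝ, (∫ y, h y ∂μ) = (2*B)⁻¹ * ∫ y in (-B)..B, h y := by
    intro h
    rw [hμ, MeasureTheory.integral_smul_measure, ENNReal.toReal_inv, ENNReal.toReal_ofReal (by linarith),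
      smul_eq_mul, integral_Icc_eq_integral_Ioc,
      ← intervalIntegral.integral_of_le (by linarith : (-B:ℝ) ≤ B)]
  rw [h1, MeasureTheory.integral_prod f hfint]
  have h3 : ∀ x : ℝ, (∫ y, f (x, y) ∂μ)
      = (2*B)⁻¹ * ∫ y in (-B)..B, Real.exp (-(c^2*(x-y)^2)/4) := fun x => h2 _
  simp only [h3]
  rw [h2]
  rw [intervalIntegral.integral_const_mul, main_int c B hc hB]
  rw [phi]
  have hQ : Real.sqrt 2 * (c * B) = Real.sqrt 2 * (c * B) := rfl
  have he : -(c*B)^2 = -(c^2*B^2) := by ring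
  rw [he]
  have hπ : Real.sqrt π ≥ 0 := Real.sqrt_nonneg _
  field_simp
  ring
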